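/- Let X be compact, c continuous symmetric with values in [0,D], ε > 0, k = exp(−c/ε), α a probability measure on X, (L_α f)(x) = ∫ k(x,z) f(z) dα(z). Then for all nonnegative continuous f, f' with L_α f and L_α f' strictly positive, the Hilbert metric satisfies d_H(L_α f, L_α f') ≤ 2D/ε; that is, the projective diameter of L_α is at most 2D/ε. -/
import Mathlib


open MeasureTheory

/-- Hilbert projective metric on strictly positive continuous functions on `X`. -/
noncomputable def hilbertDist {E : Type*} (X : Set E) (f f' : E → ℝ) : ℝ :=
  Real.log (sSup {r : ℝ | ∃ x ∈ X, ∃ y ∈ X, r = f x * f' y / (f y * f' x)})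

theorem projective_diameter_bound
    (d : ℕ) (X : Set (Fin d → ℝ)) (hX : IsCompact X) (hne : X.Nonempty)
    (D ε : ℝ) (hD : 0 ≤ D) (hε : 0 < ε)
    (c : (Fin d → ℝ) → (Fin d → ℝ) → ℝ)
    (hc : Continuous fun p : (Fin d → ℝ) × (Fin d → ℝ) => c p.1 p.2)
    (hcsym : ∀ x y, c x y = c y x)
    (hc0 : ∀ x ∈ X, ∀ y ∈ X, 0 ≤ c x y)
    (hcD : ∀ x ∈ X, ∀ y ∈ X, c x y ≤ D)
    (α : Measure (Fin d → ℝ)) [IsProbabilityMeasure α] (hα : α X = 1)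
    (f f' : (Fin d → ℝ) → ℝ)
    (hf : ContinuousOn f X) (hf' : ContinuousOn f' X)
    (hfnn : ∀ x ∈ X, 0 ≤ f x) (hf'nn : ∀ x ∈ X, 0 ≤ f' x)
    (hLf : ∀ x ∈ X, 0 < ∫ z in X, Real.exp (-(c x z) / ε) * f z ∂α)
    (hLf' : ∀ x ∈ X, 0 < ∫ z in X, Real.exp (-(c x z) / ε) * f' z ∂α) :
    hilbertDist X (fun x => ∫ z in X, Real.exp (-(c x z) / ε) * f z ∂α)
        (fun x => ∫ z in X, Real.exp (-(c x z) / ε) * f' z ∂α) ≤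
      2 * D / ε := by
  have hXm : MeasurableSet X := hX.measurableSet
  have hcont : ∀ x, Continuous fun z => Real.exp (-(c x z) / ε) := fun x =>
    Real.continuous_exp.comp (((hc.comp (Continuous.prodMk_right x)).neg).div_const ε)
  have hint : ∀ (g : (Fin d → ℝ) → ℝ), ContinuousOn g X → ∀ x,
      IntegrableOn (fun z => Real.exp (-(c x z) / ε) * g z) X α := fun g hg x =>
    ContinuousOn.integrableOn_compact hX (((hcont x).continuousOn).mul hg)
  have key : ∀ (g : (Fin d → ℝ) → ℝ), ContinuousOn g X → (∀ z ∈ X, 0 ≤ g z) →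
      ∀ x ∈ X, ∀ y ∈ X,
      (∫ z in X, Real.exp (-(c x z) / ε) * g z ∂α) ≤
        Real.exp (D / ε) * ∫ z in X, Real.exp (-(c y z) / ε) * g z ∂α := by
    intro g hg hgnn x hx y hy
    rw [← integral_const_mul]
    refine setIntegral_mono_on (hint g hg x) ((hint g hg y).const_mul _) hXm ?_
    intro z hz
    have h1 : -(c x z) / ε ≤ 0 := div_nonpos_of_nonpos_of_nonneg (neg_nonpos.mpr (hc0 x hx z hz)) hε.le
    have h2 : 0 ≤ (D - c y z) / ε := div_nonneg (by linarith [hcD y hy z hz]) hε.le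
    have h3 : D / ε + -(c y z) / ε = (D - c y z) / ε := by ring
    have hexp : Real.exp (-(c x z) / ε) ≤ Real.exp (D / ε) * Real.exp (-(c y z) / ε) := by
      rw [← Real.exp_add, Real.exp_le_exp]
      linarith
    calc Real.exp (-(c x z) / ε) * g z
        ≤ (Real.exp (D / ε) * Real.exp (-(c y z) / ε)) * g z :=
          mul_le_mul_of_nonneg_right hexp (hgnn z hz)
      _ = Real.exp (D / ε) * (Real.exp (-(c y z) / ε) * g z) := by ring
  set A : (Fin d → ℝ) → ℝ := fun x => ∫ z in X, Real.exp (-(c x z) / ε) * f z ∂α with hA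
  set B : (Fin d → ℝ) → ℝ := fun x => ∫ z in X, Real.exp (-(c x z) / ε) * f' z ∂α with hB
  have he2 : Real.exp (2 * D / ε) = Real.exp (D / ε) * Real.exp (D / ε) := by
    rw [← Real.exp_add]; ring_nf
  have hbound : ∀ r ∈ {r : ℝ | ∃ x ∈ X, ∃ y ∈ X, r = A x * B y / (A y * B x)},
      r ≤ Real.exp (2 * D / ε) := by
    rintro r ⟨x, hx, y, hy, rfl⟩
    have hAx := key f hf hfnn x hx y hy
    have hBy := key f' hf' hf'nn y hy x hx
    have hAy : 0 < A y := hLf y hy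
    have hBx : 0 < B x := hLf' x hx
    have hAxp : 0 < A x := hLf x hx
    have hByp : 0 < B y := hLf' y hy
    rw [div_le_iff₀ (mul_pos hAy hBx)]
    rw [he2]
    nlinarith [Real.exp_pos (D / ε)]
  obtain ⟨x0, hx0⟩ := hne
  have hmem : (1 : ℝ) ∈ {r : ℝ | ∃ x ∈ X, ∃ y ∈ X, r = A x * B y / (A y * B x)} := by
    refine ⟨x0, hx0, x0, hx0, ?_⟩
    rw [div_self (mul_pos (hLf x0 hx0) (hLf' x0 hx0)).ne']
  have hbdd : BddAbove {r : ℝ | ∃ x ∈ X, ∃ y ∈ X, r = A x * B y / (A y * B x)} :=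
    ⟨Real.exp (2 * D / ε), hbound⟩
  have hle : sSup {r : ℝ | ∃ x ∈ X, ∃ y ∈ X, r = A x * B y / (A y * B x)} ≤
      Real.exp (2 * D / ε) := csSup_le ⟨1, hmem⟩ hbound
  have hpos : 0 < sSup {r : ℝ | ∃ x ∈ X, ∃ y ∈ X, r = A x * B y / (A y * B x)} :=
    lt_of_lt_of_le one_pos (le_csSup hbdd hmem)
  unfold hilbertDist
  exact (Real.log_le_iff_le_exp hpos).mpr hle
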